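/- Let ≤ be a partial order on Fin 3 and let f : (Fin n → Fin 3) → Fin 3 be non-monotone, i.e. there exist α, β with α i ≤ β i for all i but ¬(f α ≤ f β). Then there exist a point γ : Fin n → Fin 3, a coordinate i, and a ≤ b in Fin 3 such that ¬( f (Function.update γ i a) ≤ f (Function.update γ i b) ). That is, a non-monotone unary function can be obtained from f by substituting constants. -/

import Mathlib

/-- From a function non-monotone w.r.t. a partial order on `Fin 3`, substituting
constants in all but one variable yields a non-monotone unary function. -/
theorem stmt_6 {n : ℕ} (le : Fin 3 → Fin 3 → Prop) [IsPartialOrder (Fin 3) le]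
    (f : (Fin n → Fin 3) → Fin 3)
    (α β : Fin n → Fin 3) (hab : ∀ i, le (α i) (β i)) (hf : ¬ le (f α) (f β)) :
    ∃ (γ : Fin n → Fin 3) (i : Fin n) (a b : Fin 3), le a b ∧
      ¬ le (f (Function.update γ i a)) (f (Function.update γ i b)) := by
  -- hybrid functions
  set g : ℕ → Fin n → Fin 3 := fun k i => if (i : ℕ) < k then β i else α i with hg
  have hg0 : g 0 = α := by funext i; simp [hg]
  have hgn : g n = β := by funext i; simp [hg, i.isLt]
  -- some step breaks
  by_cases hall : ∀ k < n, le (f (g k)) (f (g (k + 1)))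
  · exfalso
    have key : ∀ m ≤ n, le (f (g 0)) (f (g m)) := by
      intro m hm
      induction m with
      | zero => exact refl_of le _
      | succ m ih =>
        exact IsTrans.trans _ _ _ (ih (Nat.le_of_succ_le hm))
          (hall m (Nat.lt_of_succ_le hm))
    have := key n le_rfl
    rw [hg0, hgn] at this
    exact hf this
  · push_neg at hall
    obtain ⟨k, hk, hbad⟩ := hall
    refine ⟨g k, ⟨k, hk⟩, α ⟨k, hk⟩, β ⟨k, hk⟩, hab _, ?_⟩
    have h1 : Function.update (g k) ⟨k, hk⟩ (α ⟨k, hk⟩) = g k := by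
      have : g k ⟨k, hk⟩ = α ⟨k, hk⟩ := by simp [hg]
      rw [← this]; exact Function.update_eq_self _ _
    have h2 : Function.update (g k) ⟨k, hk⟩ (β ⟨k, hk⟩) = g (k + 1) := by
      funext i
      rcases eq_or_ne i ⟨k, hk⟩ with h | h
      · subst h; simp [hg]
      · have hne : (i : ℕ) ≠ k := fun hc => h (Fin.ext hc)
        rw [Function.update_of_ne h]
        simp only [hg]
        rcases Nat.lt_or_ge (i : ℕ) k with hlt | hge
        · simp [hlt, Nat.lt_succ_of_lt hlt]
        · have : ¬ (i : ℕ) < k := Nat.not_lt.mpr hge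
          have : ¬ (i : ℕ) < k + 1 := by omega
          simp [Nat.not_lt.mpr hge, this]
    rw [h1, h2]
    exact hbad
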